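/- Let ρ > 0, p > 0, and define μ₁, μ₂ = u + q/(2p) ∓ √(p/ρ + (q/(2p))²) and ω₁, ω₂ = ρ/2 ± ρ²q / (2√(ρ²q² + 4ρp³)). Then these satisfy the four moment equations: ω₁ + ω₂ = ρ, ω₁μ₁ + ω₂μ₂ = ρu, ω₁μ₁² + ω₂μ₂² = ρu² + p, and ω₁μ₁³ + ω₂μ₂³ = ρu³ + 3pu + q. -/

import Mathlib

/-- the bi-delta abscissas and weights solve the four moment equations. -/
theorem stmt_1 (ρ u p q : ℝ) (hρ : 0 < ρ) (hp : 0 < p)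
    (μ₁ μ₂ ω₁ ω₂ : ℝ)
    (hμ₁ : μ₁ = u + q/(2*p) - Real.sqrt (p/ρ + (q/(2*p))^2))
    (hμ₂ : μ₂ = u + q/(2*p) + Real.sqrt (p/ρ + (q/(2*p))^2))
    (hω₁ : ω₁ = ρ/2 + ρ^2*q / (2 * Real.sqrt (ρ^2*q^2 + 4*ρ*p^3)))
    (hω₂ : ω₂ = ρ/2 - ρ^2*q / (2 * Real.sqrt (ρ^2*q^2 + 4*ρ*p^3))) :
    ω₁ + ω₂ = ρ ∧
    ω₁*μ₁ + ω₂*μ₂ = ρ*u ∧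
    ω₁*μ₁^2 + ω₂*μ₂^2 = ρ*u^2 + p ∧
    ω₁*μ₁^3 + ω₂*μ₂^3 = ρ*u^3 + 3*p*u + q := by
  set s := Real.sqrt (p/ρ + (q/(2*p))^2) with hs
  set S := Real.sqrt (ρ^2*q^2 + 4*ρ*p^3) with hS
  have hspos : 0 < s := Real.sqrt_pos.mpr (by positivity)
  have hSpos : 0 < S := Real.sqrt_pos.mpr (by positivity)
  have hS2 : S^2 = ρ^2*q^2 + 4*ρ*p^3 := Real.sq_sqrt (by positivity)
  have hs2 : s^2 = p/ρ + (q/(2*p))^2 := Real.sq_sqrt (by positivity)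
  have hsS : S = 2*ρ*p*s := by
    have h1 : (2*ρ*p*s)^2 = S^2 := by
      rw [hS2]; field_simp at hs2 ⊢; nlinarith [hs2]
    have h2 : (2*ρ*p*s - S)*(2*ρ*p*s + S) = 0 := by linear_combination h1
    rcases mul_eq_zero.mp h2 with h | h
    · linarith
    · nlinarith [mul_pos (mul_pos (mul_pos two_pos hρ) hp) hspos]
  have hs2' : s^2 * (4*ρ*p^2) = 4*p^3 + ρ*q^2 := by
    field_simp at hs2; linarith [hs2]
  rw [hsS] at hω₁ hω₂
  subst hμ₁ hμ₂ hω₁ hω₂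
  refine ⟨by ring, ?_, ?_, ?_⟩
  · field_simp
    ring
  · field_simp
    linear_combination (4*p*s) * hs2'
  · field_simp
    linear_combination (24*p^2*u*s + 8*p*q*s) * hs2'
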